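/- (Generalized PPR update rules restore the invariant after a weighted edge event) Let V be a nonempty finite node set with nonnegative weights w : V → V → ℝ and positive generalized out-degrees d(x) = Σ_y w(x,y) > 0, let 0 < α < 1, let s ∈ V, and let u, v ∈ V with u ≠ v. Let Δ ∈ ℝ be an edge event on (u,v) satisfying w(u,v) + Δ ≥ 0 and d(u) + Δ > 0, and define updated weights w' by w'(x,y) = w(x,y) except w'(u,v) = w(u,v) + Δ, with updated degrees d'(x) = d(x) for x ≠ u and d'(u) = d(u) + Δ. Suppose p, r : V → ℝ satisfy the invariant for the old weights: for every i ∈ V, p(i) + α·r(i) = (1−α)·Σ_{x∈V} (w(x,i)/d(x))·p(x) + α·[i = s]. Define p' by p'(x) = p(x) for x ≠ u and p'(u) = p(u)·(d(u)+Δ)/d(u), and define r' by r'(x) = r(x) for x ∉ {u,v}, r'(u) = r(u) − Δ·p(u)/(α·d(u)), and r'(v) = r(v) + ((1−α)/α)·Δ·p(u)/d(u). Then the invariant holds for the new weights: for every i ∈ V, p'(i) + α·r'(i) = (1−α)·Σ_{x∈V} (w'(x,i)/d'(x))·p'(x) + α·[i = s]. -/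

import Mathlib

/-- **Generalized PPR update rules restore the invariant after a weighted edge
event.** Let `V` be a nonempty finite node set with nonnegative weights `w` and positive
generalized out-degrees `d(x) = Σ_y w(x,y) > 0`, let `0 < α < 1`, `s ∈ V`, and `u ≠ v` in `V`.
Let `Δ` be an edge event on `(u,v)` with `w(u,v) + Δ ≥ 0` and `d(u) + Δ > 0`, and let `w'` be
the updated weights (`w'(u,v) = w(u,v) + Δ`, unchanged elsewhere) with updated degrees `d'`
(`d'(u) = d(u) + Δ`, `d'(x) = d(x)` otherwise). Suppose `p, r` satisfy the invariant for the
old weights. Define `p'(u) = p(u)·(d(u)+Δ)/d(u)`, `r'(u) = r(u) − Δ·p(u)/(α·d(u))`,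
`r'(v) = r(v) + ((1−α)/α)·Δ·p(u)/d(u)`, leaving all other entries unchanged. Then the invariant
holds for the new weights. -/
theorem generalized_ppr_update_rules
    {V : Type*} [Fintype V] [Nonempty V] [DecidableEq V]
    (w : V → V → ℝ)
    (hw_nonneg : ∀ x y : V, 0 ≤ w x y)
    (hd_pos : ∀ x : V, 0 < ∑ y : V, w x y)
    (α : ℝ) (hα₀ : 0 < α) (hα₁ : α < 1) (s : V)
    (u v : V) (huv : u ≠ v)
    (Δ : ℝ) (hΔw : 0 ≤ w u v + Δ) (hΔd : 0 < (∑ y : V, w u y) + Δ)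
    (w' : V → V → ℝ)
    (hw' : ∀ x y : V, w' x y = if x = u ∧ y = v then w u v + Δ else w x y)
    (d' : V → ℝ)
    (hd' : ∀ x : V, d' x = if x = u then (∑ y : V, w u y) + Δ else ∑ y : V, w x y)
    (p r : V → ℝ)
    (hinv : ∀ i : V, p i + α * r i =
      (1 - α) * (∑ x : V, (w x i / ∑ y : V, w x y) * p x) +
        α * (if i = s then 1 else 0))
    (p' : V → ℝ)
    (hp' : ∀ x : V, p' x =
      if x = u then p u * ((∑ y : V, w u y) + Δ) / (∑ y : V, w u y) else p x)
    (r' : V → ℝ)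
    (hr' : ∀ x : V, r' x =
      if x = u then r u - Δ * p u / (α * ∑ y : V, w u y)
      else if x = v then r v + ((1 - α) / α) * (Δ * p u / ∑ y : V, w u y)
      else r x) :
    ∀ i : V, p' i + α * r' i =
      (1 - α) * (∑ x : V, (w' x i / d' x) * p' x) +
        α * (if i = s then 1 else 0) := by
  intro i
  have hdpos : 0 < ∑ y : V, w u y := hd_pos u
  have hdne : (∑ y : V, w u y) ≠ 0 := hdpos.ne'
  have hdΔne : (∑ y : V, w u y) + Δ ≠ 0 := hΔd.ne'
  have hane : α ≠ 0 := hα₀.ne'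
  have hsum : ∑ x : V, (w' x i / d' x) * p' x
      = (∑ x : V, (w x i / ∑ y : V, w x y) * p x)
        + (if i = v then Δ * p u / (∑ y : V, w u y) else 0) := by
    have key : ∑ x : V, ((w' x i / d' x) * p' x - (w x i / ∑ y : V, w x y) * p x)
        = (if i = v then Δ * p u / (∑ y : V, w u y) else 0) := by
      rw [Finset.sum_eq_single u]
      · rw [hw' u i, hd' u, hp' u]
        simp only [if_pos rfl, true_and, ↓reduceIte]
        by_cases hiv : i = v
        · subst hiv
          simp only [if_pos rfl, ↓reduceIte]
          field_simp
          ring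
        · simp only [if_neg hiv]
          field_simp
          ring
      · intro x _ hx
        rw [hw' x i, hd' x, hp' x]
        simp only [if_neg hx, if_neg (fun h : x = u ∧ i = v => hx h.1)]
        ring
      · intro h; exact absurd (Finset.mem_univ u) h
    rw [Finset.sum_sub_distrib] at key
    linarith [key]
  rw [hsum, mul_add, add_right_comm, ← hinv i, hp' i, hr' i]
  rcases eq_or_ne i u with rfl | hiu
  · rw [if_pos rfl, if_pos rfl, if_neg huv]
    field_simp
    ring
  · rw [if_neg hiu, if_neg hiu]
    rcases eq_or_ne i v with rfl | hiv
    · rw [if_pos rfl, if_pos rfl]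
      field_simp
      ring
    · rw [if_neg hiv, if_neg hiv]
      ring
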